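/- arXiv:1703.08978 — 4 statements merged into one kernel-verified Lean document; each statement's English description precedes it below -/
import Mathlib

section
/- Let E be a measure space, H ⊆ L²(E, μ) a closed subspace with orthogonal projection K, and C ⊆ E measurable with ‖χ_C K‖ < 1. Then for any closed subspace S ⊆ H, the linear subspace χ_{E∖C} S = { χ_{E∖C} · f : f ∈ S } is closed in L²(E, μ). -/
open MeasureTheory

/-- Let `H ⊆ L²(E, μ)` be a closed subspace with orthogonal projection `K`,
and `C ⊆ E` measurable with `‖χ_C K‖ < 1`. Then for any closed subspace `S ⊆ H`, the linear
subspace `χ_{E∖C} S = { χ_{E∖C}·f : f ∈ S }` is closed in `L²(E, μ)`. -/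
theorem image_of_closed_subspace_closed
    {E : Type*} [MeasurableSpace E] (μ : Measure E) [SigmaFinite μ]
    (H : Submodule ℂ (Lp ℂ 2 μ)) [CompleteSpace H]
    (C : Set E) (hC : MeasurableSet C)
    (MC MCc : Lp ℂ 2 μ →L[ℂ] Lp ℂ 2 μ)
    (hMC : ∀ f : Lp ℂ 2 μ, ⇑(MC f) =ᵐ[μ] C.indicator ⇑f)
    (hMCc : ∀ f : Lp ℂ 2 μ, ⇑(MCc f) =ᵐ[μ] Cᶜ.indicator ⇑f)
    (hlt : ‖MC.comp (H.subtypeL.comp (H.orthogonalProjection))‖ < 1)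
    (S : Submodule ℂ (Lp ℂ 2 μ)) (hSH : S ≤ H)
    (hSclosed : IsClosed (S : Set (Lp ℂ 2 μ))) :
    IsClosed (MCc '' (S : Set (Lp ℂ 2 μ))) := by
  set T := MC.comp (H.subtypeL.comp (H.orthogonalProjection)) with hT
  have hc0 : (0:ℝ) < 1 - ‖T‖ := by linarith
  have key : ∀ f ∈ H, ‖f‖ ≤ (1 - ‖T‖)⁻¹ * ‖MCc f‖ := by
    intro f hf
    have hsum : MC f + MCc f = f := by
      ext1
      filter_upwards [Lp.coeFn_add (MC f) (MCc f), hMC f, hMCc f] with x h1 h2 h3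
      simp only [h1, Pi.add_apply, h2, h3]
      exact congrFun (Set.indicator_self_add_compl C ⇑f) x
    have hMCf : MC f = T f := by
      simp [hT, ContinuousLinearMap.comp_apply,
        (Submodule.starProjection_apply H f).symm.trans (Submodule.starProjection_eq_self_iff.mpr hf)]
    have h1 : ‖f‖ ≤ ‖T f‖ + ‖MCc f‖ := by
      calc ‖f‖ = ‖MC f + MCc f‖ := by rw [hsum]
        _ ≤ ‖MC f‖ + ‖MCc f‖ := norm_add_le _ _
        _ = ‖T f‖ + ‖MCc f‖ := by rw [hMCf]
    have h2 : ‖T f‖ ≤ ‖T‖ * ‖f‖ := T.le_opNorm f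
    rw [le_inv_mul_iff₀ hc0]
    nlinarith
  haveI : CompleteSpace S := hSclosed.completeSpace_coe
  set g : S →L[ℂ] Lp ℂ 2 μ := MCc.comp S.subtypeL with hg
  have hanti : AntilipschitzWith ⟨(1 - ‖T‖)⁻¹, by positivity⟩ g := by
    apply ContinuousLinearMap.antilipschitz_of_bound
    intro x
    exact key x (hSH x.2)
  have hrange : IsClosed (Set.range g) := hanti.isClosed_range g.uniformContinuous
  have : MCc '' (S : Set (Lp ℂ 2 μ)) = Set.range g := by
    ext y
    constructor
    · rintro ⟨f, hf, rfl⟩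
      exact ⟨⟨f, hf⟩, rfl⟩
    · rintro ⟨⟨f, hf⟩, rfl⟩
      exact ⟨f, hf, rfl⟩
  rwa [this]
end

section
/- Let H ⊆ L²(E, μ) be a linear subspace that is a module over a subalgebra A ⊆ L^∞(E, μ). Suppose h ∈ H, B ⊆ E is measurable, ‖χ_B h‖₂ ≠ 0, and A contains an element whose restriction to every positive-measure subset of { x ∈ B : h(x) ≠ 0 } is not an elementary step function. Then the linear span of { χ_B · h · a : a ∈ A } is infinite-dimensional. -/
open MeasureTheory

set_option maxHeartbeats 4000000
set_option synthInstance.maxHeartbeats 1000000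

private lemma aeeqfun_coeFn_finset_sum {E : Type*} [MeasurableSpace E] {μ : Measure E}
    {ι : Type*} (s : Finset ι) (F : ι → (E →ₘ[μ] ℂ)) :
    ⇑(∑ i ∈ s, F i) =ᵐ[μ] fun x => ∑ i ∈ s, (F i) x := by
  classical
  induction s using Finset.induction_on with
  | empty => simpa [Pi.zero_def] using (AEEqFun.coeFn_zero : ⇑(0 : E →ₘ[μ] ℂ) =ᵐ[μ] 0)
  | @insert a s hi ih =>
    rw [Finset.sum_insert hi]
    filter_upwards [AEEqFun.coeFn_add (F a) (s.sum F), ih] with x hx hx2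
    rw [Finset.sum_insert hi, hx, Pi.add_apply, hx2]

/-- Let `H ⊆ L²(E, μ)` be a linear subspace which is a module over a
subalgebra `A ⊆ L^∞(E, μ)`. Suppose `h ∈ H`, `B` is measurable, `‖χ_B h‖₂ ≠ 0`, and `A`
contains an element whose restriction to every positive-measure subset of
`{x ∈ B : h x ≠ 0}` is not an elementary step function. Then the span of
`{ χ_B·h·a : a ∈ A }` (in a.e.-equivalence classes) is infinite-dimensional. -/
theorem module_span_infinite_dimensional
    {E : Type*} [MeasurableSpace E] (μ : Measure E)
    (A : Set (E → ℂ))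
    (hmul : ∀ a ∈ A, ∀ b ∈ A, a * b ∈ A)
    (hadd : ∀ a ∈ A, ∀ b ∈ A, a + b ∈ A)
    (hsmul : ∀ (c : ℂ), ∀ a ∈ A, c • a ∈ A)
    (hbdd : ∀ a ∈ A, ∃ M : ℝ, ∀ᵐ x ∂μ, ‖a x‖ ≤ M)
    (H : Set (E → ℂ))
    (hH2 : ∀ g ∈ H, MemLp g 2 μ)
    (hmod : ∀ a ∈ A, ∀ g ∈ H, a * g ∈ H)
    (h : E → ℂ) (hh : h ∈ H)
    (B : Set E) (hB : MeasurableSet B)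
    (hnz : eLpNorm (B.indicator h) 2 μ ≠ 0)
    (hmeas : ∀ a ∈ A, AEStronglyMeasurable (B.indicator (h * a)) μ)
    (ha : ∃ a ∈ A, ∀ C : Set E, MeasurableSet C → C ⊆ {x ∈ B | h x ≠ 0} → 0 < μ C →
      ¬ ∃ F : Finset ℂ, ∀ᵐ x ∂μ.restrict C, a x ∈ F) :
    ¬ FiniteDimensional ℂ
      ↥(Submodule.span ℂ
        {f : E →ₘ[μ] ℂ | ∃ a ∈ A, ⇑f =ᵐ[μ] B.indicator (h * a)}) := by
  intro hfin
  classical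
  obtain ⟨a, haA, haC⟩ := ha
  have hpow : ∀ k : ℕ, a ^ (k + 1) ∈ A := by
    intro k
    induction k with
    | zero => simpa using haA
    | succ m ih => rw [pow_succ]; exact hmul _ ih _ haA
  set S := Submodule.span ℂ {f : E →ₘ[μ] ℂ | ∃ a ∈ A, ⇑f =ᵐ[μ] B.indicator (h * a)}
    with hSdef
  set n := Module.finrank ℂ S with hn
  set g : Fin (n + 1) → E → ℂ := fun i => B.indicator (h * a ^ ((i : ℕ) + 1)) with hgdef
  have hg : ∀ i, AEStronglyMeasurable (g i) μ := fun i => hmeas _ (hpow i)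
  set f : Fin (n + 1) → (E →ₘ[μ] ℂ) := fun i => AEEqFun.mk (g i) (hg i) with hfdef
  have hfmem : ∀ i, f i ∈ S := by
    intro i
    apply Submodule.subset_span
    exact ⟨a ^ ((i : ℕ) + 1), hpow i, AEEqFun.coeFn_mk _ _⟩
  set v : Fin (n + 1) → S := fun i => ⟨f i, hfmem i⟩ with hvdef
  have hnli : ¬ LinearIndependent ℂ v := by
    intro hli
    have := LinearIndependent.fintype_card_le_finrank (R := ℂ) (M := ↥S) hli
    simp only [Fintype.card_fin, ← hn] at this
    omega
  obtain ⟨c, hc0, i0, hi0⟩ := (Fintype.not_linearIndependent_iff (R := ℂ) (M := ↥S) (v := v)).mp hnli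
  have hcsum : (∑ i, c i • f i) = (0 : E →ₘ[μ] ℂ) := by
    have := congrArg (Subtype.val) hc0
    simpa [hvdef] using this
  -- a.e. pointwise linear relation
  have hae : ∀ᵐ x ∂μ, ∑ i, c i * g i x = 0 := by
    have h1 := aeeqfun_coeFn_finset_sum (μ := μ) Finset.univ (fun i => c i • f i)
    rw [hcsum] at h1
    have h2 : ∀ᵐ x ∂μ, ∀ i : Fin (n + 1), (c i • f i) x = c i * g i x := by
      rw [ae_all_iff]
      intro i
      filter_upwards [AEEqFun.coeFn_smul (c i) (f i), AEEqFun.coeFn_mk (g i) (hg i)]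
        with x hx1 hx2
      rw [hx1, Pi.smul_apply, smul_eq_mul, hx2]
    filter_upwards [h1, h2, (AEEqFun.coeFn_zero : ⇑(0 : E →ₘ[μ] ℂ) =ᵐ[μ] 0)] with x hx1 hx2 hx3
    calc ∑ i, c i * g i x = ∑ i, (c i • f i) x :=
          Finset.sum_congr rfl fun i _ => (hx2 i).symm
      _ = (0 : E →ₘ[μ] ℂ) x := hx1.symm
      _ = 0 := by rw [hx3]; rfl
  -- measurable representative of h
  have hmh : AEStronglyMeasurable h μ := (hH2 h hh).1
  set h' := hmh.mk h with hh'def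
  have heq : h =ᵐ[μ] h' := hmh.ae_eq_mk
  have hsm : StronglyMeasurable h' := hmh.stronglyMeasurable_mk
  set N := toMeasurable μ {x | h x ≠ h' x} with hNdef
  have hNnull : μ N = 0 := by
    rw [hNdef, measure_toMeasurable]
    exact heq
  have hNsub : {x | h x ≠ h' x} ⊆ N := subset_toMeasurable _ _
  set C := (B ∩ {x | h' x ≠ 0}) \ N with hCdef
  have hCmeas : MeasurableSet C := by
    apply MeasurableSet.diff
    · exact hB.inter (hsm.measurable (MeasurableSet.compl (measurableSet_singleton (0 : ℂ))))
    · exact measurableSet_toMeasurable μ _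
  have hCsub : C ⊆ {x ∈ B | h x ≠ 0} := by
    intro x hx
    refine ⟨hx.1.1, ?_⟩
    have hxeq : h x = h' x := by
      by_contra hne
      exact hx.2 (hNsub hne)
    rw [hxeq]
    exact hx.1.2
  have hCpos : 0 < μ C := by
    rcases (show (0 : ENNReal) ≤ μ C from zero_le).lt_or_eq with hlt | heq0
    · exact hlt
    · exfalso
      apply hnz
      have hzero : B.indicator h =ᵐ[μ] 0 := by
        filter_upwards [measure_eq_zero_iff_ae_notMem.mp heq0.symm,
          measure_eq_zero_iff_ae_notMem.mp hNnull] with x hxC hxN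
        by_cases hxB : x ∈ B
        · have hxeq : h x = h' x := by
            by_contra hne
            exact hxN (hNsub hne)
          have hx0 : h' x = 0 := by
            by_contra hne
            exact hxC ⟨⟨hxB, hne⟩, hxN⟩
          simp [Set.indicator_of_mem hxB, hxeq, hx0]
        · simp [Set.indicator_of_notMem hxB]
      rw [eLpNorm_congr_ae hzero, eLpNorm_zero]
  -- the polynomial
  set q : Polynomial ℂ := ∑ i : Fin (n + 1), Polynomial.C (c i) * Polynomial.X ^ ((i : ℕ) + 1)
    with hqdef
  have hqcoeff : q.coeff ((i0 : ℕ) + 1) = c i0 := by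
    rw [hqdef, Polynomial.finset_sum_coeff]
    rw [Finset.sum_eq_single i0]
    · simp
    · intro b _ hb
      have hne : (i0 : ℕ) + 1 ≠ (b : ℕ) + 1 := by
        simp only [add_left_inj, Ne, Fin.val_inj]
        exact fun hx => hb hx.symm
      simp [Polynomial.coeff_C_mul, Polynomial.coeff_X_pow, hne, Fin.val_inj, hb.symm]
    · intro hb
      exact absurd (Finset.mem_univ i0) hb
  have hq0 : q ≠ 0 := by
    intro hqz
    rw [hqz] at hqcoeff
    simp at hqcoeff
    exact hi0 hqcoeff.symm
  -- derive the contradiction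
  apply haC C hCmeas hCsub hCpos
  refine ⟨q.roots.toFinset, ?_⟩
  rw [ae_restrict_iff' hCmeas]
  filter_upwards [hae] with x hx hxC
  have hxB : x ∈ B := hxC.1.1
  have hxh : h x ≠ 0 := (hCsub hxC).2
  have hgx : ∀ i : Fin (n + 1), g i x = h x * (a x) ^ ((i : ℕ) + 1) := by
    intro i
    simp [hgdef, Set.indicator_of_mem hxB, Pi.mul_apply, Pi.pow_apply]
  have hsum : ∑ i : Fin (n + 1), c i * (h x * (a x) ^ ((i : ℕ) + 1)) = 0 := by
    rw [← hx]
    exact Finset.sum_congr rfl fun i _ => by rw [hgx i]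
  have hmulz : h x * q.eval (a x) = 0 := by
    rw [hqdef]
    simp only [Polynomial.eval_finset_sum, Polynomial.eval_mul, Polynomial.eval_C,
      Polynomial.eval_pow, Polynomial.eval_X, Finset.mul_sum]
    rw [← hsum]
    exact Finset.sum_congr rfl fun i _ => by ring
  have heval : q.IsRoot (a x) := (mul_eq_zero.mp hmulz).resolve_left hxh
  rw [Multiset.mem_toFinset, Polynomial.mem_roots hq0]
  exact heval
end

section
/- Let E be a locally compact Polish space with Radon measure μ of full support, and let H ⊆ L²(E, μ) be a reproducing kernel Hilbert space with the unique extension property: for any measurable C with μ(C) > 0, any φ ∈ H vanishing μ-a.e. on C vanishes identically. Assume E is non-compact, dim H = ∞, and the reproducing kernel K (the orthogonal projection onto H) is locally of trace class. Then for every relatively compact Borel subset B ⊆ E, the operator χ_B K has operator norm strictly less than 1. -/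
set_option maxHeartbeats 1000000


open MeasureTheory
local notation "⟪" x ", " y "⟫" => @inner ℂ _ _ x y

/-- Let `E` be a locally compact Polish space with a Radon measure `μ` of
full support, and `H ⊆ L²(E, μ)` a reproducing kernel Hilbert space (a closed subspace, with
`K` the orthogonal projection onto it, locally of trace class — here: `χ_B K χ_B` compact for
all relatively compact Borel `B`) with the unique extension property, `E` non-compact and
`dim H = ∞`. Then for every relatively compact Borel `B ⊆ E`, `‖χ_B K‖ < 1`. -/
theorem strict_contractivity_of_localized_projection
    {E : Type*} [TopologicalSpace E] [PolishSpace E] [LocallyCompactSpace E]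
    [MeasurableSpace E] [BorelSpace E]
    (μ : Measure E) [μ.Regular] [SigmaFinite μ]
    (hsupp : ∀ O : Set E, IsOpen O → O.Nonempty → 0 < μ O)
    (hnc : ¬ IsCompact (Set.univ : Set E))
    (H : Submodule ℂ (Lp ℂ 2 μ)) [CompleteSpace H]
    (hdim : ¬ FiniteDimensional ℂ H)
    (huep : ∀ C : Set E, MeasurableSet C → 0 < μ C → ∀ f : Lp ℂ 2 μ, f ∈ H →
      (∀ᵐ x ∂μ.restrict C, f x = 0) → f = 0)
    (M : Set E → (Lp ℂ 2 μ →L[ℂ] Lp ℂ 2 μ))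
    (hM : ∀ A : Set E, MeasurableSet A → ∀ f : Lp ℂ 2 μ, ⇑(M A f) =ᵐ[μ] A.indicator ⇑f)
    (htc : ∀ B : Set E, MeasurableSet B → IsCompact (closure B) →
      IsCompactOperator
        ((M B).comp ((H.subtypeL.comp H.orthogonalProjectionOnto).comp (M B)))) :
    ∀ B : Set E, MeasurableSet B → IsCompact (closure B) →
      ‖(M B).comp (H.subtypeL.comp H.orthogonalProjectionOnto)‖ < 1 := by
  intro B hB hBc
  set P : Lp ℂ 2 μ →L[ℂ] Lp ℂ 2 μ := H.subtypeL.comp H.orthogonalProjectionOnto with hPdef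
  set T : Lp ℂ 2 μ →L[ℂ] Lp ℂ 2 μ := (M B).comp P with hTdef
  set R : Lp ℂ 2 μ →L[ℂ] Lp ℂ 2 μ := P.comp (M B) with hRdef
  set S : Lp ℂ 2 μ →L[ℂ] Lp ℂ 2 μ := (M B).comp (P.comp (M B)) with hSdef
  -- M B is a pointwise contraction
  have hMle : ∀ f : Lp ℂ 2 μ, ‖M B f‖ ≤ ‖f‖ := by
    intro f
    rw [Lp.norm_def, Lp.norm_def]
    refine ENNReal.toReal_mono (Lp.eLpNorm_ne_top f) ?_
    rw [eLpNorm_congr_ae (hM B hB f)]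
    exact eLpNorm_indicator_le _
  -- P is a pointwise contraction
  have hPle : ∀ f : Lp ℂ 2 μ, ‖P f‖ ≤ ‖f‖ := by
    intro f
    have : ‖P f‖ = ‖H.orthogonalProjectionOnto f‖ := rfl
    rw [this]
    calc ‖H.orthogonalProjectionOnto f‖ ≤ ‖H.orthogonalProjectionOnto‖ * ‖f‖ :=
          H.orthogonalProjectionOnto.le_opNorm f
      _ ≤ 1 * ‖f‖ := by
          exact mul_le_mul_of_nonneg_right (Submodule.orthogonalProjectionOnto_norm_le H) (norm_nonneg f)
      _ = ‖f‖ := one_mul _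
  have hTle : ∀ f : Lp ℂ 2 μ, ‖T f‖ ≤ ‖f‖ := fun f => (hMle (P f)).trans (hPle f)
  have hRle : ∀ f : Lp ℂ 2 μ, ‖R f‖ ≤ ‖f‖ := fun f => (hPle (M B f)).trans (hMle f)
  have hT1 : ‖T‖ ≤ 1 := T.opNorm_le_bound zero_le_one (fun f => by
    simpa using hTle f)
  -- M B is symmetric
  have hMsym : ∀ f g : Lp ℂ 2 μ, ⟪M B f, g⟫ = ⟪f, M B g⟫ := by
    intro f g
    rw [L2.inner_def, L2.inner_def]
    refine integral_congr_ae ?_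
    filter_upwards [hM B hB f, hM B hB g] with x h1 h2
    rw [h1, h2]
    by_cases hx : x ∈ B <;>
      simp [Set.indicator_of_mem, Set.indicator_of_notMem, hx, RCLike.inner_apply]
  -- P is symmetric
  have hPsym : ∀ f g : Lp ℂ 2 μ, ⟪P f, g⟫ = ⟪f, P g⟫ := by
    intro f g
    have hsa : IsSelfAdjoint P := isSelfAdjoint_starProjection H
    calc ⟪P f, g⟫ = ⟪(ContinuousLinearMap.adjoint P) f, g⟫ := by rw [hsa.adjoint_eq]
      _ = ⟪f, P g⟫ := ContinuousLinearMap.adjoint_inner_left P g f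
  -- P is idempotent
  have hPP : ∀ f : Lp ℂ 2 μ, P (P f) = P f := by
    intro f
    have h2 : H.orthogonalProjectionOnto ((H.orthogonalProjectionOnto f : H) : Lp ℂ 2 μ)
        = H.orthogonalProjectionOnto f :=
      Submodule.orthogonalProjectionOnto_mem_subspace_eq_self (H.orthogonalProjectionOnto f)
    calc P (P f)
        = ((H.orthogonalProjectionOnto ((H.orthogonalProjectionOnto f : H) : Lp ℂ 2 μ) : H) : Lp ℂ 2 μ) :=
          rfl
      _ = ((H.orthogonalProjectionOnto f : H) : Lp ℂ 2 μ) := by rw [h2]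
      _ = P f := rfl
  -- T is the adjoint of R
  have hadj : T = ContinuousLinearMap.adjoint R := by
    rw [ContinuousLinearMap.eq_adjoint_iff]
    intro x y
    calc ⟪T x, y⟫ = ⟪M B (P x), y⟫ := rfl
      _ = ⟪P x, M B y⟫ := hMsym _ _
      _ = ⟪x, P (M B y)⟫ := hPsym _ _
      _ = ⟪x, R y⟫ := rfl
  have hTR : ‖T‖ = ‖R‖ := by rw [hadj]; exact ContinuousLinearMap.adjoint.norm_map R
  -- S = T ∘ R
  have hSTR : ∀ f : Lp ℂ 2 μ, S f = T (R f) := by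
    intro f
    show M B (P (M B f)) = M B (P (P (M B f)))
    rw [hPP]
  by_contra hlt
  push_neg at hlt
  have hTnorm : ‖T‖ = 1 := le_antisymm hT1 hlt
  have hRnorm : ‖R‖ = 1 := by rw [← hTR, hTnorm]
  -- choose an approximating sequence
  have hx : ∀ n : ℕ, ∃ x : Lp ℂ 2 μ, ‖x‖ < 1 ∧ 1 - 1/(n+1 : ℝ) < ‖R x‖ := by
    intro n
    refine R.exists_lt_apply_of_lt_opNorm ?_
    rw [hRnorm]
    have : 0 < 1/(n+1 : ℝ) := by positivity
    linarith
  choose x hx1 hx2 using hx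
  have hxle : ∀ n, ‖x n‖ ≤ 1 := fun n => (hx1 n).le
  have hRxle1 : ∀ n, ‖R (x n)‖ ≤ 1 := fun n => (hRle (x n)).trans (hxle n)
  have hlow : Filter.Tendsto (fun n : ℕ => 1 - 1/(n+1 : ℝ)) Filter.atTop (nhds 1) := by
    have := tendsto_one_div_add_atTop_nhds_zero_nat (𝕜 := ℝ)
    have h2 := Filter.Tendsto.const_sub (1 : ℝ) this
    simpa using h2
  have hRx : Filter.Tendsto (fun n => ‖R (x n)‖) Filter.atTop (nhds 1) := by
    refine tendsto_of_tendsto_of_tendsto_of_le_of_le hlow tendsto_const_nhds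
      (fun n => (hx2 n).le) hRxle1
  have hxnorm : Filter.Tendsto (fun n => ‖x n‖) Filter.atTop (nhds 1) := by
    refine tendsto_of_tendsto_of_tendsto_of_le_of_le hlow tendsto_const_nhds
      (fun n => le_trans (hx2 n).le (hRle (x n))) hxle
  -- the square norms ‖S xₙ - xₙ‖² tend to 0
  have hkey : ∀ n, ‖S (x n) - x n‖^2 ≤ 2 - 2 * ‖R (x n)‖^2 := by
    intro n
    have hre : RCLike.re (⟪S (x n), x n⟫) = ‖R (x n)‖^2 := by
      rw [hSTR, hadj, ContinuousLinearMap.adjoint_inner_left]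
      exact inner_self_eq_norm_sq _
    have hSle : ‖S (x n)‖ ≤ 1 := by
      rw [hSTR]; exact ((hTle (R (x n))).trans (hRle (x n))).trans (hxle n)
    have h1 : ‖S (x n) - x n‖^2
        = ‖S (x n)‖^2 - 2 * RCLike.re (⟪S (x n), x n⟫) + ‖x n‖^2 :=
      norm_sub_sq (𝕜 := ℂ) _ _
    rw [h1, hre]
    have h2 : ‖S (x n)‖^2 ≤ 1 := by
      have := sq_nonneg (‖S (x n)‖)
      nlinarith [norm_nonneg (S (x n))]
    have h3 : ‖x n‖^2 ≤ 1 := by nlinarith [norm_nonneg (x n), hxle n]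
    nlinarith [hRle (x n), norm_nonneg (R (x n))]
  have hsq0 : Filter.Tendsto (fun n => ‖S (x n) - x n‖^2) Filter.atTop (nhds 0) := by
    have hup : Filter.Tendsto (fun n => 2 - 2 * ‖R (x n)‖^2) Filter.atTop (nhds 0) := by
      have := (hRx.pow 2).const_mul (2:ℝ)
      have h2 := Filter.Tendsto.const_sub (2 : ℝ) this
      simpa using h2
    exact squeeze_zero (fun n => sq_nonneg _) hkey hup
  have hdiff0 : Filter.Tendsto (fun n => S (x n) - x n) Filter.atTop (nhds 0) := by
    rw [tendsto_zero_iff_norm_tendsto_zero]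
    have := (Real.continuous_sqrt.tendsto 0).comp hsq0
    simp only [Real.sqrt_zero] at this
    refine this.congr (fun n => ?_)
    exact Real.sqrt_sq (norm_nonneg _)
  -- compactness: extract a convergent subsequence of S xₙ
  obtain ⟨K, hKc, hKsub⟩ :=
    (htc B hB hBc).image_subset_compact_of_bounded (Metric.isBounded_closedBall
      (x := (0 : Lp ℂ 2 μ)) (r := 1))
  have hmem : ∀ n, S (x n) ∈ K := by
    intro n
    refine hKsub ⟨x n, ?_, rfl⟩
    simp [Metric.mem_closedBall, dist_eq_norm, hxle n]
  obtain ⟨y, _, φ, hφ, hconv⟩ := hKc.tendsto_subseq hmem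
  have hφt : Filter.Tendsto φ Filter.atTop Filter.atTop := hφ.tendsto_atTop
  have hxconv : Filter.Tendsto (fun n => x (φ n)) Filter.atTop (nhds y) := by
    have h2 : Filter.Tendsto (fun n => S (x (φ n)) - x (φ n)) Filter.atTop (nhds 0) :=
      hdiff0.comp hφt
    have := hconv.sub h2
    simpa using this
  have hSy : S y = y := by
    have h1 : Filter.Tendsto (fun n => S (x (φ n))) Filter.atTop (nhds (S y)) :=
      (S.continuous.tendsto y).comp hxconv
    exact tendsto_nhds_unique h1 hconv
  have hynorm : ‖y‖ = 1 := by
    have h1 : Filter.Tendsto (fun n => ‖x (φ n)‖) Filter.atTop (nhds ‖y‖) := hxconv.norm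
    have h2 : Filter.Tendsto (fun n => ‖x (φ n)‖) Filter.atTop (nhds 1) := hxnorm.comp hφt
    exact tendsto_nhds_unique h1 h2
  -- now derive the contradiction
  set g : Lp ℂ 2 μ := P (M B y) with hgdef
  have hgH : g ∈ H := (H.orthogonalProjectionOnto (M B y) : H).2
  have hMg : M B g = y := by
    calc M B g = S y := rfl
      _ = y := hSy
  have hgle : ‖g‖ ≤ 1 := by
    calc ‖g‖ ≤ ‖M B y‖ := hPle _
      _ ≤ ‖y‖ := hMle _
      _ = 1 := hynorm
  -- M B is idempotent
  have hMidem : ∀ f : Lp ℂ 2 μ, M B (M B f) = M B f := by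
    intro f
    refine Lp.ext ?_
    filter_upwards [hM B hB (M B f), hM B hB f] with a h1 h2
    rw [h1]
    by_cases ha : a ∈ B
    · rw [Set.indicator_of_mem ha]
    · rw [Set.indicator_of_notMem ha, h2, Set.indicator_of_notMem ha]
  -- Pythagoras forces g = M B g
  have hinner0 : ⟪M B g, g - M B g⟫ = 0 := by
    rw [inner_sub_right]
    rw [hMsym g g, hMsym g (M B g), hMidem]
    ring
  have hgMg : g = M B g := by
    have hdecomp : g = M B g + (g - M B g) := by abel
    have hpyth : ‖g‖^2 = ‖M B g‖^2 + ‖g - M B g‖^2 := by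
      conv_lhs => rw [hdecomp]
      rw [norm_add_sq (𝕜 := ℂ), hinner0]
      simp
    have hMgnorm : ‖M B g‖ = 1 := by rw [hMg, hynorm]
    have h0 : ‖g - M B g‖^2 ≤ 0 := by nlinarith [norm_nonneg g]
    have : ‖g - M B g‖ = 0 := by nlinarith [norm_nonneg (g - M B g)]
    have h4 : g - M B g = 0 := norm_eq_zero.mp this
    exact sub_eq_zero.mp h4
  -- hence g vanishes a.e. outside B
  have hgae : ⇑g =ᵐ[μ] B.indicator ⇑g := by
    calc ⇑g =ᵐ[μ] ⇑(M B g) := by rw [← hgMg]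
      _ =ᵐ[μ] B.indicator ⇑g := hM B hB g
  -- the complement of the closure of B is open, nonempty, of positive measure
  set C : Set E := (closure B)ᶜ with hCdef
  have hCopen : IsOpen C := isClosed_closure.isOpen_compl
  have hCne : C.Nonempty := by
    rcases Set.eq_empty_or_nonempty C with h | h
    · exfalso
      apply hnc
      have : closure B = Set.univ := by
        rw [← Set.compl_empty_iff, ← hCdef, h]
      rwa [this] at hBc
    · exact h
  have hCpos : 0 < μ C := hsupp C hCopen hCne
  have hg0 : ∀ᵐ a ∂μ.restrict C, g a = 0 := by
    have h1 : ∀ᵐ a ∂μ.restrict C, g a = B.indicator ⇑g a := ae_restrict_of_ae hgae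
    have h2 : ∀ᵐ a ∂μ.restrict C, a ∈ C := ae_restrict_mem hCopen.measurableSet
    filter_upwards [h1, h2] with a ha1 ha2
    rw [ha1, Set.indicator_of_notMem]
    intro haB
    exact ha2 (subset_closure haB)
  have hgzero : g = 0 := huep C hCopen.measurableSet hCpos g hgH hg0
  have : y = 0 := by rw [← hMg, hgzero, map_zero]
  rw [this, norm_zero] at hynorm
  norm_num at hynorm
end

section
/- Let E be a measure space, H ⊆ L²(E, μ) a closed subspace with orthogonal projection K, and B a measurable set such that χ_B K χ_B is compact. If ‖χ_B K‖ = 1, then there exists a nonzero ψ ∈ H such that χ_B K (χ_{E∖B} ψ) = 0 and χ_B ψ ≠ 0. -/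
set_option maxHeartbeats 1000000


open MeasureTheory Filter Topology

open scoped InnerProductSpace

/-- Let `H ⊆ L²(E, μ)` be a closed subspace with orthogonal projection
`K`, and `B` measurable with `χ_B K χ_B` compact. If `‖χ_B K‖ = 1`, then there is a nonzero
`ψ ∈ H` with `χ_B K (χ_{E∖B} ψ) = 0` and `χ_B ψ ≠ 0`. -/
theorem norm_one_yields_special_vector
    {E : Type*} [MeasurableSpace E] (μ : Measure E) [SigmaFinite μ]
    (H : Submodule ℂ (Lp ℂ 2 μ)) [CompleteSpace H]
    (B : Set E) (hB : MeasurableSet B)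
    (MB MBc : Lp ℂ 2 μ →L[ℂ] Lp ℂ 2 μ)
    (hMB : ∀ f : Lp ℂ 2 μ, ⇑(MB f) =ᵐ[μ] B.indicator ⇑f)
    (hMBc : ∀ f : Lp ℂ 2 μ, ⇑(MBc f) =ᵐ[μ] Bᶜ.indicator ⇑f)
    (hcomp : IsCompactOperator
      (MB.comp ((H.subtypeL.comp (H.orthogonalProjectionOnto)).comp MB)))
    (hnorm : ‖MB.comp (H.subtypeL.comp (H.orthogonalProjectionOnto))‖ = 1) :
    ∃ ψ : Lp ℂ 2 μ, ψ ∈ H ∧ ψ ≠ 0 ∧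
      MB ((H.subtypeL.comp (H.orthogonalProjectionOnto)) (MBc ψ)) = 0 ∧ MB ψ ≠ 0 := by
  classical
  set P : Lp ℂ 2 μ →L[ℂ] Lp ℂ 2 μ := H.subtypeL.comp (H.orthogonalProjectionOnto) with hPdef
  -- Basic facts about MB
  have hMBidem : ∀ f, MB (MB f) = MB f := by
    intro f
    apply Lp.ext
    filter_upwards [hMB (MB f), hMB f] with a h1 h2
    rw [h1, Set.indicator_apply]
    by_cases ha : a ∈ B
    · simp [ha]
    · simp [ha, h2, Set.indicator_of_notMem ha]
  have hMBinner : ∀ f g : Lp ℂ 2 μ, ⟪MB f, g⟫_ℂ = ⟪f, MB g⟫_ℂ := by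
    intro f g
    rw [MeasureTheory.L2.inner_def, MeasureTheory.L2.inner_def]
    apply integral_congr_ae
    filter_upwards [hMB f, hMB g] with a h1 h2
    rw [h1, h2, Set.indicator_apply, Set.indicator_apply]
    by_cases ha : a ∈ B <;> simp [ha]
  have hMBnorm : ∀ f, ‖MB f‖ ≤ ‖f‖ := by
    intro f
    have h1 : ‖MB f‖ ^ 2 = RCLike.re ⟪f, MB f⟫_ℂ := by
      rw [← inner_self_eq_norm_sq (𝕜 := ℂ) (MB f), hMBinner f (MB f), hMBidem f]
    have h2 : RCLike.re ⟪f, MB f⟫_ℂ ≤ ‖f‖ * ‖MB f‖ :=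
      (RCLike.re_le_norm _).trans (norm_inner_le_norm _ _)
    nlinarith [norm_nonneg (MB f), norm_nonneg f]
  have hMBc_eq : ∀ f, MBc f = f - MB f := by
    intro f
    apply Lp.ext
    filter_upwards [hMBc f, hMB f, Lp.coeFn_sub f (MB f)] with a h1 h2 h3
    rw [h1, h3, Pi.sub_apply, h2]
    by_cases ha : a ∈ B <;> simp [Set.indicator_apply, ha]
  -- Basic facts about P
  have hPinner : ∀ u v : Lp ℂ 2 μ, ⟪P u, v⟫_ℂ = ⟪u, P v⟫_ℂ := fun u v =>
    Submodule.inner_starProjection_left_eq_right H u v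
  have hPidem : ∀ f, P (P f) = P f := by
    intro f
    simp only [hPdef, ContinuousLinearMap.comp_apply, Submodule.subtypeL_apply,
      Submodule.orthogonalProjectionOnto_mem_subspace_eq_self]
  have hPself : ∀ f, RCLike.re ⟪P f, f⟫_ℂ = ‖P f‖ ^ 2 := by
    intro f
    rw [← hPidem f, hPinner (P f) f, hPidem f, inner_self_eq_norm_sq (𝕜 := ℂ)]
  have hPnorm : ∀ f, ‖P f‖ ≤ ‖f‖ := by
    intro f
    have h1 := hPself f
    have h2 : RCLike.re ⟪P f, f⟫_ℂ ≤ ‖P f‖ * ‖f‖ :=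
      (RCLike.re_le_norm _).trans (norm_inner_le_norm _ _)
    nlinarith [norm_nonneg (P f), norm_nonneg f]
  set S : Lp ℂ 2 μ →L[ℂ] Lp ℂ 2 μ := MB.comp (P.comp MB) with hSdef
  have hS : ∀ x, S x = MB (P (MB x)) := fun x => rfl
  -- choose an approximating sequence
  have hex : ∀ n : ℕ, ∃ u : Lp ℂ 2 μ, ‖u‖ < 1 ∧
      1 - 1 / (n + 1) < ‖(MB.comp P) u‖ := by
    intro n
    apply (MB.comp P).exists_lt_apply_of_lt_opNorm
    rw [hnorm]
    have : (0 : ℝ) < 1 / (n + 1) := by positivity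
    linarith
  choose u hu1 hu2 using hex
  set v : ℕ → Lp ℂ 2 μ := fun n => MB (P (u n)) with hvdef
  have hv_le1 : ∀ n, ‖v n‖ ≤ 1 :=
    fun n => ((hMBnorm _).trans ((hPnorm _).trans (hu1 n).le))
  have hv_lt : ∀ n, 1 - 1 / (n + 1) < ‖v n‖ := fun n => hu2 n
  have hMBv : ∀ n, MB (v n) = v n := fun n => hMBidem _
  have key1 : ∀ n, ‖v n‖ ^ 2 ≤ ‖P (v n)‖ := by
    intro n
    have e1 : ⟪v n, v n⟫_ℂ = ⟪u n, P (v n)⟫_ℂ := by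
      conv_lhs => rw [hvdef]
      rw [hMBinner, hMBv n, hPinner]
    have e2 : RCLike.re ⟪u n, P (v n)⟫_ℂ ≤ ‖u n‖ * ‖P (v n)‖ :=
      (RCLike.re_le_norm _).trans (norm_inner_le_norm _ _)
    have e3 : ‖v n‖ ^ 2 = RCLike.re ⟪u n, P (v n)⟫_ℂ := by
      rw [← e1, inner_self_eq_norm_sq (𝕜 := ℂ)]
    nlinarith [norm_nonneg (P (v n)), (hu1 n).le, norm_nonneg (u n)]
  have key2 : ∀ n, RCLike.re ⟪S (v n), v n⟫_ℂ = ‖P (v n)‖ ^ 2 := by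
    intro n
    rw [hS, hMBv n, hMBinner, hMBv n, hPself]
  have key3 : ∀ n, ‖S (v n)‖ ≤ ‖P (v n)‖ := by
    intro n
    rw [hS, hMBv n]
    exact hMBnorm _
  have key4 : ∀ n, ‖S (v n) - v n‖ ^ 2 ≤ 1 - ‖v n‖ ^ 4 := by
    intro n
    have e1 := norm_sub_sq (𝕜 := ℂ) (S (v n)) (v n)
    have e2 := key1 n
    have e3 := key2 n
    have e4 := key3 n
    have e5 := hv_le1 n
    nlinarith [norm_nonneg (S (v n)), norm_nonneg (v n), norm_nonneg (P (v n)),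
      norm_nonneg (S (v n) - v n)]
  -- limits
  have tend_a : Tendsto (fun n => ‖v n‖) atTop (𝓝 1) := by
    have hlow : Tendsto (fun n : ℕ => 1 - 1 / ((n : ℝ) + 1)) atTop (𝓝 1) := by
      have := tendsto_one_div_add_atTop_nhds_zero_nat (𝕜 := ℝ)
      have h := (tendsto_const_nhds (x := (1 : ℝ)) (f := atTop)).sub this
      simpa using h
    exact tendsto_of_tendsto_of_tendsto_of_le_of_le hlow tendsto_const_nhds
      (fun n => (hv_lt n).le) hv_le1
  have tend_dsq : Tendsto (fun n => ‖S (v n) - v n‖ ^ 2) atTop (𝓝 0) := by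
    have hup : Tendsto (fun n => 1 - ‖v n‖ ^ 4) atTop (𝓝 0) := by
      have := (tendsto_const_nhds (x := (1 : ℝ)) (f := atTop)).sub (tend_a.pow 4)
      simpa using this
    exact tendsto_of_tendsto_of_tendsto_of_le_of_le tendsto_const_nhds hup
      (fun n => sq_nonneg _) key4
  have tend_d : Tendsto (fun n => ‖S (v n) - v n‖) atTop (𝓝 0) := by
    have h0 := tend_dsq.sqrt
    simp only [Real.sqrt_zero] at h0
    have : (fun n => Real.sqrt (‖S (v n) - v n‖ ^ 2)) = fun n => ‖S (v n) - v n‖ := by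
      funext n; exact Real.sqrt_sq (norm_nonneg _)
    rwa [this] at h0
  -- compactness
  have hK : IsCompact (closure (⇑S '' Metric.closedBall 0 1)) := by
    exact IsCompactOperator.isCompact_closure_image_closedBall (𝕜₁ := ℂ)
      (f := (S : Lp ℂ 2 μ →ₗ[ℂ] Lp ℂ 2 μ)) hcomp 1
  have hmem : ∀ n, S (v n) ∈ closure (⇑S '' Metric.closedBall 0 1) := by
    intro n
    apply subset_closure
    exact ⟨v n, Metric.mem_closedBall.2 (by simpa using hv_le1 n), rfl⟩
  obtain ⟨y, -, g, hg, htend⟩ := hK.tendsto_subseq hmem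
  have htend_v : Tendsto (fun n => v (g n)) atTop (𝓝 y) := by
    have hd : Tendsto (fun n => S (v (g n)) - v (g n)) atTop (𝓝 0) := by
      apply tendsto_zero_iff_norm_tendsto_zero.2
      exact tend_d.comp hg.tendsto_atTop
    have := htend.sub hd
    simpa using this
  have hy_norm : ‖y‖ = 1 :=
    tendsto_nhds_unique (htend_v.norm) (tend_a.comp hg.tendsto_atTop)
  have hy_ne : y ≠ 0 := by
    intro h
    rw [h, norm_zero] at hy_norm
    norm_num at hy_norm
  have hSy : S y = y :=
    tendsto_nhds_unique ((S.continuous.tendsto y).comp htend_v) htend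
  have hMBy : MB y = y := by
    have h1 : MB (S y) = S y := by rw [hS]; exact hMBidem _
    rwa [hSy] at h1
  have hMBPy : MB (P y) = y := by
    conv_lhs => rw [← hMBy]
    rw [← hS, hSy]
  -- the special vector
  refine ⟨P y, ?_, ?_, ?_, ?_⟩
  · simp only [hPdef, ContinuousLinearMap.comp_apply, Submodule.subtypeL_apply]
    exact Submodule.coe_mem _
  · intro h
    rw [h, map_zero] at hMBPy
    exact hy_ne hMBPy.symm
  · rw [hMBc_eq, hMBPy, map_sub, hPidem, sub_self, map_zero]
  · rw [hMBPy]
    exact hy_ne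
end
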